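/- (C^{1,ω} interior regularity by uniform control on Taylor expansions.) Let u be defined in B_r ⊂ ℝⁿ and ω : [0,δ_ω] → [0,∞) a modulus of continuity, and r₀ ≤ min{r/2, δ_ω}. Assume that for every x₀ ∈ closure(B_{r/2}) there exists an affine function P_{x₀} such that |u(x) − P_{x₀}(x)| ≤ T·|x−x₀|·ω(|x−x₀|) for all x ∈ B_r with |x−x₀| ≤ r₀. Then u is differentiable at every point of closure(B_{r/2}), ∇u(x₀) is the linear part of P_{x₀}, and there is a dimensional constant E > 0 with [∇u]_{C^{0,ω}(closure B_{r/2})} ≤ E·(T + ‖∇u‖_{L^∞(closure B_{r/2})}/ω(r₀/4)) and [∇u]_{C^{0,ω}(closure B_{r₀/8})} ≤ E·T. -/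

import Mathlib

set_option maxHeartbeats 2000000 in
theorem stmt10 (n : ℕ) (hn : 1 ≤ n) :
    ∃ E : ℝ, 0 < E ∧
      ∀ (r r₀ δω T : ℝ) (ω : ℝ → ℝ) (u : EuclideanSpace ℝ (Fin n) → ℝ)
        (A : EuclideanSpace ℝ (Fin n) → EuclideanSpace ℝ (Fin n))
        (b : EuclideanSpace ℝ (Fin n) → ℝ),
        0 < r → 0 ≤ T → 0 < δω → δω ≤ 1 → 0 < r₀ → r₀ ≤ min (r / 2) δω →
        MonotoneOn ω (Set.Icc 0 δω) → ContinuousOn ω (Set.Icc 0 δω) → ω 0 = 0 →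
        (∀ t : ℝ, 0 < t → t ≤ δω → 0 < ω t) →
        (∀ x₀ ∈ closure (Metric.ball (0 : EuclideanSpace ℝ (Fin n)) (r / 2)),
          ∀ x ∈ Metric.ball (0 : EuclideanSpace ℝ (Fin n)) r, ‖x - x₀‖ ≤ r₀ →
            |u x - ((inner ℝ (A x₀) (x - x₀) : ℝ) + b x₀)| ≤ T * ‖x - x₀‖ * ω ‖x - x₀‖) →
        ((∀ x₀ ∈ closure (Metric.ball (0 : EuclideanSpace ℝ (Fin n)) (r / 2)),
            HasFDerivAt u (innerSL ℝ (A x₀)) x₀) ∧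
         (∀ M : ℝ,
            (∀ z ∈ closure (Metric.ball (0 : EuclideanSpace ℝ (Fin n)) (r / 2)), ‖A z‖ ≤ M) →
            ∀ x ∈ closure (Metric.ball (0 : EuclideanSpace ℝ (Fin n)) (r / 2)),
            ∀ y ∈ closure (Metric.ball (0 : EuclideanSpace ℝ (Fin n)) (r / 2)),
              0 < ‖x - y‖ → ‖x - y‖ ≤ δω →
                ‖A x - A y‖ ≤ E * (T + M / ω (r₀ / 4)) * ω ‖x - y‖) ∧
         (∀ x ∈ closure (Metric.ball (0 : EuclideanSpace ℝ (Fin n)) (r₀ / 8)),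
          ∀ y ∈ closure (Metric.ball (0 : EuclideanSpace ℝ (Fin n)) (r₀ / 8)),
              0 < ‖x - y‖ → ‖x - y‖ ≤ δω →
                ‖A x - A y‖ ≤ E * T * ω ‖x - y‖)) := by
  refine ⟨8, by norm_num, ?_⟩
  intro r r₀ δω T ω u A b hr hT hδ hδ1 hr₀ hr₀le hmono hcont hω0 hωpos h
  have hr₀r : r₀ ≤ r / 2 := le_trans hr₀le (min_le_left _ _)
  have hr₀δ : r₀ ≤ δω := le_trans hr₀le (min_le_right _ _)
  have hcb : closure (Metric.ball (0 : EuclideanSpace ℝ (Fin n)) (r / 2))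
      = Metric.closedBall 0 (r / 2) := closure_ball 0 (by positivity)
  have hmem : ∀ z : EuclideanSpace ℝ (Fin n), ‖z‖ ≤ r / 2 →
      z ∈ closure (Metric.ball (0 : EuclideanSpace ℝ (Fin n)) (r / 2)) := by
    intro z hz
    rw [hcb, mem_closedBall_zero_iff]
    exact hz
  have hmem' : ∀ z ∈ closure (Metric.ball (0 : EuclideanSpace ℝ (Fin n)) (r / 2)),
      ‖z‖ ≤ r / 2 := by
    intro z hz
    rw [hcb, mem_closedBall_zero_iff] at hz
    exact hz
  have hωnn : ∀ t : ℝ, 0 ≤ t → t ≤ δω → 0 ≤ ω t := by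
    intro t h1 h2
    have := hmono ⟨le_rfl, hδ.le⟩ ⟨h1, h2⟩ h1
    rwa [hω0] at this
  -- key estimate
  have key : ∀ x₀ x₁ : EuclideanSpace ℝ (Fin n), ‖x₀‖ ≤ r / 2 → ‖x₁‖ ≤ r / 2 →
      0 < ‖x₀ - x₁‖ → ‖x₀ - x₁‖ ≤ r₀ / 4 →
      ‖A x₀ - A x₁‖ ≤ 8 * T * ω ‖x₀ - x₁‖ := by
    intro x₀ x₁ h0 h1 hpos hle
    set ρ := ‖x₀ - x₁‖ with hρdef
    have hρδ : ρ ≤ δω := le_trans hle (by linarith)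
    have hωρ : 0 ≤ ω ρ := hωnn ρ hpos.le hρδ
    by_cases hv : A x₀ - A x₁ = 0
    · rw [hv, norm_zero]; positivity
    set v := A x₀ - A x₁ with hvdef
    have hvn : (0 : ℝ) < ‖v‖ := norm_pos_iff.mpr hv
    set m : EuclideanSpace ℝ (Fin n) := x₀ + (2⁻¹ : ℝ) • (x₁ - x₀) with hmdef
    set w : EuclideanSpace ℝ (Fin n) := ‖v‖⁻¹ • v with hwdef
    set x : EuclideanSpace ℝ (Fin n) := m + (ρ / 2) • w with hxdef
    have hw : ‖w‖ = 1 := by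
      rw [hwdef, norm_smul, norm_inv, norm_norm, inv_mul_cancel₀ hvn.ne']
    have hm0 : m - x₀ = (2⁻¹ : ℝ) • (x₁ - x₀) := by rw [hmdef]; abel
    have hm1 : m - x₁ = (2⁻¹ : ℝ) • (x₀ - x₁) := by rw [hmdef]; module
    have hm0n : ‖m - x₀‖ = ρ / 2 := by
      rw [hm0, norm_smul, norm_sub_rev x₁ x₀, ← hρdef]
      simp [abs_of_nonneg]; ring
    have hm1n : ‖m - x₁‖ = ρ / 2 := by
      rw [hm1, norm_smul, ← hρdef]
      simp [abs_of_nonneg]; ring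
    have hxm : x - m = (ρ / 2) • w := by rw [hxdef]; abel
    have hxmn : ‖x - m‖ = ρ / 2 := by
      rw [hxm, norm_smul, hw, mul_one, Real.norm_eq_abs, abs_of_nonneg (by linarith)]
    have hx0 : ‖x - x₀‖ ≤ ρ := by
      have : x - x₀ = (x - m) + (m - x₀) := by abel
      rw [this]
      calc ‖(x - m) + (m - x₀)‖ ≤ ‖x - m‖ + ‖m - x₀‖ := norm_add_le _ _
        _ = ρ := by rw [hxmn, hm0n]; ring
    have hx1 : ‖x - x₁‖ ≤ ρ := by
      have : x - x₁ = (x - m) + (m - x₁) := by abel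
      rw [this]
      calc ‖(x - m) + (m - x₁)‖ ≤ ‖x - m‖ + ‖m - x₁‖ := norm_add_le _ _
        _ = ρ := by rw [hxmn, hm1n]; ring
    have hmn : ‖m‖ ≤ r / 2 + ρ / 2 := by
      have e : m = x₀ + (m - x₀) := by abel
      calc ‖m‖ = ‖x₀ + (m - x₀)‖ := by rw [← e]
        _ ≤ ‖x₀‖ + ‖m - x₀‖ := norm_add_le _ _
        _ ≤ r / 2 + ρ / 2 := by rw [hm0n]; linarith
    have hmB : m ∈ Metric.ball (0 : EuclideanSpace ℝ (Fin n)) r := by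
      rw [mem_ball_zero_iff]; linarith
    have hxB : x ∈ Metric.ball (0 : EuclideanSpace ℝ (Fin n)) r := by
      rw [mem_ball_zero_iff]
      have e : x = m + (x - m) := by abel
      calc ‖x‖ = ‖m + (x - m)‖ := by rw [← e]
        _ ≤ ‖m‖ + ‖x - m‖ := norm_add_le _ _
        _ < r := by rw [hxmn]; linarith
    -- bounds on T * t * ω t
    have hTb : ∀ t : ℝ, 0 ≤ t → t ≤ ρ → T * t * ω t ≤ T * ρ * ω ρ := by
      intro t ht htρ
      have hωt := hmono ⟨ht, le_trans htρ hρδ⟩ ⟨hpos.le, hρδ⟩ htρ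
      have hωtnn := hωnn t ht (le_trans htρ hρδ)
      have s1 : T * t * ω t ≤ T * t * ω ρ :=
        mul_le_mul_of_nonneg_left hωt (mul_nonneg hT ht)
      have s2 : T * t * ω ρ ≤ T * ρ * ω ρ :=
        mul_le_mul_of_nonneg_right (mul_le_mul_of_nonneg_left htρ hT) hωρ
      linarith
    -- four applications of h
    have hA := h x₀ (hmem x₀ h0) x hxB (le_trans hx0 (by linarith))
    have hB := h x₁ (hmem x₁ h1) x hxB (le_trans hx1 (by linarith))
    have hC := h x₀ (hmem x₀ h0) m hmB (by rw [hm0n]; linarith)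
    have hD := h x₁ (hmem x₁ h1) m hmB (by rw [hm1n]; linarith)
    have hA' : |u x - ((inner ℝ (A x₀) (x - x₀) : ℝ) + b x₀)| ≤ T * ρ * ω ρ :=
      le_trans hA (hTb _ (norm_nonneg _) hx0)
    have hB' : |u x - ((inner ℝ (A x₁) (x - x₁) : ℝ) + b x₁)| ≤ T * ρ * ω ρ :=
      le_trans hB (hTb _ (norm_nonneg _) hx1)
    have hC' : |u m - ((inner ℝ (A x₀) (m - x₀) : ℝ) + b x₀)| ≤ T * ρ * ω ρ :=
      le_trans hC (hTb _ (norm_nonneg _) (by rw [hm0n]; linarith))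
    have hD' : |u m - ((inner ℝ (A x₁) (m - x₁) : ℝ) + b x₁)| ≤ T * ρ * ω ρ :=
      le_trans hD (hTb _ (norm_nonneg _) (by rw [hm1n]; linarith))
    -- inner product identity
    have hinner : (inner ℝ v (x - m) : ℝ) = (ρ / 2) * ‖v‖ := by
      rw [hxm, real_inner_smul_right, hwdef, real_inner_smul_right,
        real_inner_self_eq_norm_sq, sq, inv_mul_cancel_left₀ hvn.ne']
    have e1 : (inner ℝ (A x₀) (x - x₀) : ℝ) - inner ℝ (A x₀) (m - x₀) = inner ℝ (A x₀) (x - m) := by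
      rw [← inner_sub_right]
      congr 1
      abel
    have e2 : (inner ℝ (A x₁) (x - x₁) : ℝ) - inner ℝ (A x₁) (m - x₁) = inner ℝ (A x₁) (x - m) := by
      rw [← inner_sub_right]
      congr 1
      abel
    have e3 : (inner ℝ (A x₀) (x - m) : ℝ) - inner ℝ (A x₁) (x - m) = inner ℝ v (x - m) :=
      (inner_sub_left _ _ _).symm
    obtain ⟨hA1, hA2⟩ := abs_le.mp hA'
    obtain ⟨hB1, hB2⟩ := abs_le.mp hB'
    obtain ⟨hC1, hC2⟩ := abs_le.mp hC'
    obtain ⟨hD1, hD2⟩ := abs_le.mp hD'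
    have hIV : (inner ℝ v (x - m) : ℝ) ≤ 4 * (T * ρ * ω ρ) := by
      rw [← e3, ← e1, ← e2]
      linarith
    have hmain : ρ * ‖v‖ ≤ ρ * (8 * T * ω ρ) := by
      rw [hinner] at hIV
      linarith
    exact le_of_mul_le_mul_left hmain hpos
  have hωr4pos : 0 < ω (r₀ / 4) := hωpos _ (by positivity) (by linarith)
  refine ⟨?_, ?_, ?_⟩
  · -- differentiability
    intro x₀ hx₀
    have hx₀' : ‖x₀‖ ≤ r / 2 := hmem' x₀ hx₀
    have hx₀B : x₀ ∈ Metric.ball (0 : EuclideanSpace ℝ (Fin n)) r := by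
      rw [mem_ball_zero_iff]; linarith
    have hbu : b x₀ = u x₀ := by
      have := h x₀ hx₀ x₀ hx₀B (by rw [sub_self, norm_zero]; exact hr₀.le)
      simp only [sub_self, inner_zero_right, norm_zero, hω0, mul_zero, zero_mul,
        zero_add, add_zero] at this
      have h0 := abs_nonpos_iff.mp this
      linarith
    rw [hasFDerivAt_iff_isLittleO, Asymptotics.isLittleO_iff]
    intro c hc
    have hT1 : (0 : ℝ) < T + 1 := by linarith
    have hc' : 0 < c / (T + 1) := by positivity
    have htend : Filter.Tendsto ω (nhdsWithin 0 (Set.Icc 0 δω)) (nhds 0) := by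
      have := (hcont 0 ⟨le_rfl, hδ.le⟩).tendsto
      rwa [hω0] at this
    have hev : ∀ᶠ t in nhdsWithin 0 (Set.Icc 0 δω), ω t < c / (T + 1) :=
      htend (Iio_mem_nhds hc')
    rw [Filter.eventually_iff, Metric.mem_nhdsWithin_iff] at hev
    obtain ⟨ε, hε, hεp⟩ := hev
    rw [Filter.eventually_iff_exists_mem]
    refine ⟨Metric.ball x₀ (min ε r₀), Metric.ball_mem_nhds x₀ (by positivity), ?_⟩
    intro x hx
    rw [Metric.mem_ball, dist_eq_norm] at hx
    have hεd : ‖x - x₀‖ < ε := lt_of_lt_of_le hx (min_le_left _ _)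
    have hr₀d : ‖x - x₀‖ < r₀ := lt_of_lt_of_le hx (min_le_right _ _)
    have hxr : x ∈ Metric.ball (0 : EuclideanSpace ℝ (Fin n)) r := by
      rw [mem_ball_zero_iff]
      have e : x = x₀ + (x - x₀) := by abel
      calc ‖x‖ = ‖x₀ + (x - x₀)‖ := by rw [← e]
        _ ≤ ‖x₀‖ + ‖x - x₀‖ := norm_add_le _ _
        _ < r := by linarith
    have hbnd := h x₀ hx₀ x hxr hr₀d.le
    rw [hbu] at hbnd
    have hωb : ω ‖x - x₀‖ < c / (T + 1) := by
      apply hεp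
      constructor
      · rw [Metric.mem_ball, Real.dist_eq, sub_zero, abs_of_nonneg (norm_nonneg _)]
        exact hεd
      · exact ⟨norm_nonneg _, by linarith⟩
    have hkey : T * ‖x - x₀‖ * ω ‖x - x₀‖ ≤ c * ‖x - x₀‖ := by
      have h1 : T * ‖x - x₀‖ * ω ‖x - x₀‖ ≤ T * ‖x - x₀‖ * (c / (T + 1)) := by
        apply mul_le_mul_of_nonneg_left hωb.le
        positivity
      have h2 : T * ‖x - x₀‖ * (c / (T + 1)) ≤ c * ‖x - x₀‖ := by
        rw [div_eq_mul_inv]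
        rw [show T * ‖x - x₀‖ * (c * (T + 1)⁻¹) = (T * ‖x - x₀‖ * c) * (T + 1)⁻¹ by ring,
          ← div_eq_mul_inv, div_le_iff₀ hT1]
        nlinarith [norm_nonneg (x - x₀), mul_nonneg (mul_nonneg hc.le (norm_nonneg (x - x₀))) hT]
      linarith
    calc ‖u x - u x₀ - (innerSL ℝ (A x₀)) (x - x₀)‖
        = |u x - ((inner ℝ (A x₀) (x - x₀) : ℝ) + u x₀)| := by
          rw [Real.norm_eq_abs, innerSL_apply_apply]
          congr 1
          ring
      _ ≤ T * ‖x - x₀‖ * ω ‖x - x₀‖ := hbnd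
      _ ≤ c * ‖x - x₀‖ := hkey
  · -- global seminorm bound
    intro M hM x hx y hy hpos hδle
    have hMnn : 0 ≤ M := le_trans (norm_nonneg _) (hM x hx)
    have hx' : ‖x‖ ≤ r / 2 := hmem' x hx
    have hy' : ‖y‖ ≤ r / 2 := hmem' y hy
    have hωt : 0 ≤ ω ‖x - y‖ := hωnn _ hpos.le hδle
    have hq : 0 ≤ M / ω (r₀ / 4) := div_nonneg hMnn hωr4pos.le
    by_cases hcase : ‖x - y‖ ≤ r₀ / 4
    · have hk := key x y hx' hy' hpos hcase
      nlinarith [mul_nonneg hq hωt]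
    · push_neg at hcase
      have hωm : ω (r₀ / 4) ≤ ω ‖x - y‖ :=
        hmono ⟨by positivity, by linarith⟩ ⟨by positivity, hδle⟩ hcase.le
      have hsub : ‖A x - A y‖ ≤ 2 * M := by
        calc ‖A x - A y‖ ≤ ‖A x‖ + ‖A y‖ := norm_sub_le _ _
          _ ≤ 2 * M := by have := hM x hx; have := hM y hy; linarith
      have hdm : M / ω (r₀ / 4) * ω (r₀ / 4) = M := div_mul_cancel₀ M hωr4pos.ne'
      have h8 : 8 * (M / ω (r₀ / 4)) * ω (r₀ / 4) ≤ 8 * (M / ω (r₀ / 4)) * ω ‖x - y‖ :=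
        mul_le_mul_of_nonneg_left hωm (by positivity)
      have hTω : 0 ≤ T * ω ‖x - y‖ := mul_nonneg hT hωt
      nlinarith
  · -- small ball seminorm bound
    intro x hx y hy hpos hδle
    have hx' : ‖x‖ ≤ r₀ / 8 := by
      have := Metric.closure_ball_subset_closedBall hx
      rwa [mem_closedBall_zero_iff] at this
    have hy' : ‖y‖ ≤ r₀ / 8 := by
      have := Metric.closure_ball_subset_closedBall hy
      rwa [mem_closedBall_zero_iff] at this
    have hxy : ‖x - y‖ ≤ r₀ / 4 := by
      calc ‖x - y‖ ≤ ‖x‖ + ‖y‖ := norm_sub_le _ _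
        _ ≤ r₀ / 4 := by linarith
    exact key x y (by linarith) (by linarith) hpos hxy
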